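/- For every n ≥ 1: if C_4^{□n} (≅ Q_{2n}) has a source cycle, i.e., a Latin Hamilton decomposition, then C_4^{□2n} (≅ Q_{4n}) also has a source cycle. -/

import Mathlib

open SimpleGraph

/-- The hypercube graph `Q_n` on vertex set `Fin n → Bool`:
two vertices are adjacent iff they differ in exactly one coordinate. -/
def hypercube (n : ℕ) : SimpleGraph (Fin n → Bool) where
  Adj u v := ∃ i, u i ≠ v i ∧ ∀ j, j ≠ i → u j = v j
  symm := by
    constructor
    rintro u v ⟨i, hne, hrest⟩
    exact ⟨i, hne.symm, fun j hj => (hrest j hj).symm⟩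
  loopless := by
    constructor
    rintro u ⟨i, hne, -⟩
    exact hne rfl

/-- The cycle graph `C_m` on `ZMod m`: `i` and `j` are adjacent iff
`i - j = 1` or `j - i = 1`. -/
def cycGraph (m : ℕ) : SimpleGraph (ZMod m) :=
  SimpleGraph.fromRel (fun i j => i - j = 1)

/-- The graph `C_m^{□k}` on `Fin k → ZMod m`: two vertices are adjacent iff they
differ in exactly one coordinate, and in that coordinate they differ by `±1`. -/
def torusGraph (m k : ℕ) : SimpleGraph (Fin k → ZMod m) where
  Adj u v := ∃ i, (u i ≠ v i ∧ (u i - v i = 1 ∨ v i - u i = 1)) ∧ ∀ j, j ≠ i → u j = v j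
  symm := by
    constructor
    rintro u v ⟨i, ⟨hne, hpm⟩, hrest⟩
    exact ⟨i, ⟨hne.symm, hpm.symm⟩, fun j hj => (hrest j hj).symm⟩
  loopless := by
    constructor
    rintro u ⟨i, ⟨hne, -⟩, -⟩
    exact hne rfl

private lemma torus_adj_comp (m k : ℕ) (σ : Equiv.Perm (Fin k)) {u v : Fin k → ZMod m}
    (h : (torusGraph m k).Adj u v) : (torusGraph m k).Adj (u ∘ σ) (v ∘ σ) := by
  obtain ⟨i, ⟨hne, hpm⟩, hrest⟩ := h
  refine ⟨σ.symm i, ⟨?_, ?_⟩, ?_⟩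
  · simpa using hne
  · simpa using hpm
  · intro j hj
    have : σ j ≠ i := fun hc => hj (by simp [← hc])
    simpa using hrest (σ j) this

/-- The automorphism of `C_m^{□k}` induced by a permutation `σ` of the axes,
sending a vertex `v : Fin k → ZMod m` to `v ∘ σ⁻¹`. -/
def permIso (m k : ℕ) (σ : Equiv.Perm (Fin k)) : torusGraph m k ≃g torusGraph m k where
  toEquiv := Equiv.arrowCongr σ (Equiv.refl (ZMod m))
  map_rel_iff' := by
    intro u v
    constructor
    · intro h
      have h2 := torus_adj_comp m k σ h
      have hu : (Equiv.arrowCongr σ (Equiv.refl (ZMod m)) u) ∘ σ = u := by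
        funext x; simp
      have hv : (Equiv.arrowCongr σ (Equiv.refl (ZMod m)) v) ∘ σ = v := by
        funext x; simp
      rwa [hu, hv] at h2
    · intro h
      have h2 := torus_adj_comp m k σ.symm h
      have hu : u ∘ ⇑σ.symm = Equiv.arrowCongr σ (Equiv.refl (ZMod m)) u := by
        funext x; simp
      have hv : v ∘ ⇑σ.symm = Equiv.arrowCongr σ (Equiv.refl (ZMod m)) v := by
        funext x; simp
      rwa [hu, hv] at h2

/-- A Hamilton decomposition of a simple graph `G`: a family of Hamiltonian cycles
whose edge sets are pairwise disjoint and together cover every edge of `G`. -/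
def IsHamDecomp {V : Type*} [DecidableEq V] (G : SimpleGraph V) {ι : Type*}
    (C : ι → Σ v, G.Walk v v) : Prop :=
  (∀ i, (C i).2.IsHamiltonianCycle) ∧
  (∀ i j, i ≠ j → ∀ e, e ∈ (C i).2.edges → e ∉ (C j).2.edges) ∧
  (∀ e ∈ G.edgeSet, ∃ i, e ∈ (C i).2.edges)

/-- `C_m^{□k}` has a *source cycle* if it has a Latin Hamilton decomposition:
a Hamiltonian cycle `H` and a Latin family `(σ₁, …, σ_k)` of permutations of the axes
(`σ₁ = id` and every column `i ↦ σᵢ(j)` is a bijection) such that the images of `H`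
under the induced automorphisms form a Hamilton decomposition. -/
def HasSourceCycle (m k : ℕ) : Prop :=
  ∃ (v : Fin k → ZMod m) (H : (torusGraph m k).Walk v v) (σ : Fin k → Equiv.Perm (Fin k)),
    (∀ h : 0 < k, σ ⟨0, h⟩ = 1) ∧ (∀ j, Function.Bijective (fun i => σ i j)) ∧
    IsHamDecomp (torusGraph m k) (fun i => ⟨_, H.map (permIso m k (σ i)).toHom⟩)

namespace SCDouble

variable {V : Type*} {G : SimpleGraph V}

lemma edges_eq_range {u v : V} (p : G.Walk u v) :
    p.edges = (List.range p.length).map (fun i => s(p.getVert i, p.getVert (i+1))) := by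
  induction p with
  | nil => simp
  | cons h q ih =>
      rw [Walk.edges_cons, ih]
      rw [Walk.length_cons, List.range_succ_eq_map]
      simp [Walk.getVert_cons_succ, Function.comp]

lemma support_eq_range {u v : V} (p : G.Walk u v) :
    p.support = (List.range (p.length + 1)).map p.getVert := by
  induction p with
  | nil => simp [List.range_succ]
  | cons h q ih =>
      rw [Walk.support_cons, ih]
      rw [Walk.length_cons, List.range_succ_eq_map]
      simp [Walk.getVert_cons_succ, Function.comp, List.range_succ_eq_map]

/-- Build a walk from a step function. -/
def mkWalk (f : ℕ → V) : (L : ℕ) → (hf : ∀ t < L, G.Adj (f t) (f (t+1))) → G.Walk (f 0) (f L)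
  | 0, _ => Walk.nil
  | (L+1), hf => (mkWalk f L (fun t ht => hf t (by omega))).concat (hf L (by omega))

@[simp] lemma mkWalk_length (f : ℕ → V) (L : ℕ) (hf : ∀ t < L, G.Adj (f t) (f (t+1))) :
    (mkWalk f L hf).length = L := by
  induction L with
  | zero => rfl
  | succ L ih => simp [mkWalk, Walk.length_concat, ih]

lemma mkWalk_edges (f : ℕ → V) (L : ℕ) (hf : ∀ t < L, G.Adj (f t) (f (t+1))) :
    (mkWalk f L hf).edges = (List.range L).map (fun t => s(f t, f (t+1))) := by
  induction L with
  | zero => rfl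
  | succ L ih => rw [List.range_succ]; simp [mkWalk, Walk.edges_concat, ih]

lemma mkWalk_support (f : ℕ → V) (L : ℕ) (hf : ∀ t < L, G.Adj (f t) (f (t+1))) :
    (mkWalk f L hf).support = (List.range (L+1)).map f := by
  induction L with
  | zero => simp [mkWalk, List.range_succ]
  | succ L ih =>
      rw [show L + 1 + 1 = (L+1) + 1 from rfl, List.range_succ]
      simp [mkWalk, Walk.support_concat, ih]

variable {n : ℕ}

def eq2 (n : ℕ) : (Fin n ⊕ Fin n) ≃ Fin (2 * n) := finSumFinEquiv.trans (finCongr (two_mul n).symm)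

def glue (a b : Fin n → ZMod 4) : Fin (2 * n) → ZMod 4 := fun j => Sum.elim a b ((eq2 n).symm j)

@[simp] lemma glue_inl (a b : Fin n → ZMod 4) (i : Fin n) : glue a b (eq2 n (.inl i)) = a i := by
  simp [glue]

@[simp] lemma glue_inr (a b : Fin n → ZMod 4) (i : Fin n) : glue a b (eq2 n (.inr i)) = b i := by
  simp [glue]

lemma glue_inj {a b a' b' : Fin n → ZMod 4} (h : glue a b = glue a' b') : a = a' ∧ b = b' := by
  constructor
  · funext i; have := congrFun h (eq2 n (.inl i)); simpa using this
  · funext i; have := congrFun h (eq2 n (.inr i)); simpa using this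

lemma glue_eta (u : Fin (2*n) → ZMod 4) :
    glue (fun i => u (eq2 n (.inl i))) (fun i => u (eq2 n (.inr i))) = u := by
  funext j
  obtain ⟨s, rfl⟩ : ∃ s, j = eq2 n s := ⟨(eq2 n).symm j, by simp⟩
  cases s <;> simp

lemma adj_glue_left {a a' : Fin n → ZMod 4} (h : (torusGraph 4 n).Adj a a') (b : Fin n → ZMod 4) :
    (torusGraph 4 (2*n)).Adj (glue a b) (glue a' b) := by
  obtain ⟨i, hi, hrest⟩ := h
  refine ⟨eq2 n (.inl i), by simpa using hi, ?_⟩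
  intro j hj
  obtain ⟨s, rfl⟩ : ∃ s, j = eq2 n s := ⟨(eq2 n).symm j, by simp⟩
  rcases s with i' | i'
  · have : i' ≠ i := by rintro rfl; exact hj rfl
    simp [hrest i' this]
  · simp

lemma adj_glue_right {b b' : Fin n → ZMod 4} (h : (torusGraph 4 n).Adj b b') (a : Fin n → ZMod 4) :
    (torusGraph 4 (2*n)).Adj (glue a b) (glue a b') := by
  obtain ⟨i, hi, hrest⟩ := h
  refine ⟨eq2 n (.inr i), by simpa using hi, ?_⟩
  intro j hj
  obtain ⟨s, rfl⟩ : ∃ s, j = eq2 n s := ⟨(eq2 n).symm j, by simp⟩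
  rcases s with i' | i'
  · simp
  · have : i' ≠ i := by rintro rfl; exact hj rfl
    simp [hrest i' this]

def bperm (n : ℕ) (ρ : Equiv.Perm (Fin n)) : Equiv.Perm (Fin (2 * n)) :=
  (eq2 n).permCongr (Equiv.sumCongr ρ ρ)

def swp (n : ℕ) : Equiv.Perm (Fin (2 * n)) := (eq2 n).permCongr (Equiv.sumComm (Fin n) (Fin n))

def mapFun (m k : ℕ) (τ : Equiv.Perm (Fin k)) : (Fin k → ZMod m) → (Fin k → ZMod m) :=
  fun x => x ∘ τ.symm

lemma mapFun_eq_toHom (m k : ℕ) (τ : Equiv.Perm (Fin k)) (x : Fin k → ZMod m) :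
    (permIso m k τ).toHom x = mapFun m k τ x := rfl

lemma mapFun_bperm (ρ : Equiv.Perm (Fin n)) (a b : Fin n → ZMod 4) :
    mapFun 4 (2*n) (bperm n ρ) (glue a b) = glue (mapFun 4 n ρ a) (mapFun 4 n ρ b) := by
  funext j
  obtain ⟨s, rfl⟩ : ∃ s, j = eq2 n s := ⟨(eq2 n).symm j, by simp⟩
  cases s <;>
    simp [mapFun, glue, bperm, Equiv.permCongr_def, Equiv.symm_trans_apply, Function.comp]

lemma mapFun_swp (a b : Fin n → ZMod 4) :
    mapFun 4 (2*n) (swp n) (glue a b) = glue b a := by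
  funext j
  obtain ⟨s, rfl⟩ : ∃ s, j = eq2 n s := ⟨(eq2 n).symm j, by simp⟩
  cases s <;>
    simp [mapFun, glue, swp, Equiv.permCongr_def, Equiv.symm_trans_apply, Function.comp]

lemma mapFun_mul (m k : ℕ) (τ₁ τ₂ : Equiv.Perm (Fin k)) (x : Fin k → ZMod m) :
    mapFun m k (τ₁ * τ₂) x = mapFun m k τ₁ (mapFun m k τ₂ x) := by
  funext j; simp [mapFun, Equiv.Perm.mul_def, Equiv.symm_trans_apply]

lemma mapFun_inj (m k : ℕ) (τ : Equiv.Perm (Fin k)) : Function.Injective (mapFun m k τ) := by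
  intro x y h
  funext j
  have := congrFun h (τ j)
  simpa [mapFun] using this

section PLayer

variable {n : ℕ}

instance instNZ (n : ℕ) : NeZero (4^n) := ⟨pow_ne_zero _ (by norm_num)⟩

lemma cardV (n : ℕ) : Fintype.card (Fin n → ZMod 4) = 4^n := by simp

lemma fourN_ge (hn : 1 ≤ n) : 4 ≤ 4^n := by
  calc 4 = 4^1 := (pow_one 4).symm
  _ ≤ 4^n := Nat.pow_le_pow_right (by norm_num) hn

/-- The vertex of `H` at position `z`. -/
def P {v : Fin n → ZMod 4} (H : (torusGraph 4 n).Walk v v) (z : ZMod (4^n)) : Fin n → ZMod 4 :=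
  H.getVert z.val

variable {v : Fin n → ZMod 4} {H : (torusGraph 4 n).Walk v v}

lemma Hlen (hH : H.IsHamiltonianCycle) : H.length = 4^n := by
  rw [hH.length_eq, cardV]

lemma val_add_one (hn : 1 ≤ n) (z : ZMod (4^n)) :
    (z + 1).val = (z.val + 1) % 4^n := by
  haveI : Fact (1 < 4^n) := ⟨by have := fourN_ge hn; omega⟩
  rw [ZMod.val_add, ZMod.val_one]

lemma Pstep (hn : 1 ≤ n) (hH : H.IsHamiltonianCycle) (z : ZMod (4^n)) :
    s(P H z, P H (z+1)) ∈ H.edges := by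
  have hval : z.val < 4^n := ZMod.val_lt z
  have hadd := val_add_one hn z
  rw [edges_eq_range, List.mem_map]
  refine ⟨z.val, by simp [List.mem_range, Hlen hH, hval], ?_⟩
  rcases Nat.lt_or_ge (z.val + 1) (4^n) with h | h
  · rw [Nat.mod_eq_of_lt h] at hadd
    simp [P, hadd]
  · have : (z.val + 1) % 4^n = 0 := by
      have : z.val + 1 = 4^n := by omega
      simp [this]
    rw [this] at hadd
    have h1 : H.getVert (z.val + 1) = v := by
      apply Walk.getVert_of_length_le
      rw [Hlen hH]; omega
    have h2 : P H (z+1) = v := by simp [P, hadd]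
    show s(H.getVert z.val, H.getVert (z.val+1)) = s(P H z, P H (z+1))
    rw [h1, h2]
    rfl

lemma Padj (hn : 1 ≤ n) (hH : H.IsHamiltonianCycle) (z : ZMod (4^n)) :
    (torusGraph 4 n).Adj (P H z) (P H (z+1)) :=
  Walk.adj_of_mem_edges H (Pstep hn hH z)

lemma getVert_inj (hH : H.IsHamiltonianCycle) {t t' : ℕ} (ht : t < 4^n) (ht' : t' < 4^n)
    (h : H.getVert t = H.getVert t') : t = t' := by
  have hlen := Hlen hH
  have hnodup : H.support.tail.Nodup := hH.isCycle.support_nodup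
  rw [support_eq_range, hlen, List.range_succ_eq_map, List.map_cons, List.map_map,
    List.tail_cons] at hnodup
  have key : ∀ a b : ℕ, a < 4^n → b < 4^n → H.getVert (a+1) = H.getVert (b+1) → a = b := by
    intro a b ha hb hab
    exact List.inj_on_of_nodup_map hnodup (List.mem_range.2 ha) (List.mem_range.2 hb) hab
  have hv0 : H.getVert (4^n) = v := by rw [← hlen]; exact H.getVert_length
  have hN0 : 0 < 4^n := pow_pos (by norm_num) _
  cases t with
  | zero =>
      cases t' with
      | zero => rfl
      | succ s' =>
          exfalso
          have h2 : H.getVert (s'+1) = H.getVert ((4^n - 1)+1) := by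
            rw [show 4^n - 1 + 1 = 4^n by omega, hv0]
            simpa using h.symm
          have := key s' (4^n - 1) (by omega) (by omega) h2
          omega
  | succ s =>
      cases t' with
      | zero =>
          exfalso
          have h2 : H.getVert (s+1) = H.getVert ((4^n - 1)+1) := by
            rw [show 4^n - 1 + 1 = 4^n by omega, hv0]
            simpa using h
          have := key s (4^n - 1) (by omega) (by omega) h2
          omega
      | succ s' =>
          have := key s s' (by omega) (by omega) h
          omega

lemma Pinj (hH : H.IsHamiltonianCycle) : Function.Injective (P H) := fun z z' h =>
  ZMod.val_injective _ (getVert_inj hH z.val_lt z'.val_lt h)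

lemma Psurj (hH : H.IsHamiltonianCycle) : Function.Surjective (P H) := by
  intro w
  have hw := hH.mem_support w
  rw [Walk.mem_support_iff_exists_getVert] at hw
  obtain ⟨t, hw, hle⟩ := hw
  rw [Hlen hH] at hle
  rcases eq_or_lt_of_le hle with h | h
  · refine ⟨0, ?_⟩
    have hv0 : H.getVert (4^n) = v := by rw [← Hlen hH]; exact H.getVert_length
    have : P H 0 = v := by simp [P]
    rw [this, ← hw, h, hv0]
  · exact ⟨(t : ZMod (4^n)), by rw [P, ZMod.val_cast_of_lt h, hw]⟩

lemma two_ne_zero_z (hn : 1 ≤ n) : (2 : ZMod (4^n)) ≠ 0 := by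
  have h4 := fourN_ge hn
  intro h
  have : ((2:ℕ) : ZMod (4^n)) = 0 := by push_cast; exact h
  have hv := congrArg ZMod.val this
  rw [ZMod.val_cast_of_lt (by omega)] at hv
  simp at hv

lemma PedgeInj (hn : 1 ≤ n) (hH : H.IsHamiltonianCycle) {z z' : ZMod (4^n)}
    (h : s(P H z, P H (z+1)) = s(P H z', P H (z'+1))) : z = z' := by
  rw [Sym2.eq_iff] at h
  rcases h with ⟨h1, _⟩ | ⟨h1, h2⟩
  · exact Pinj hH h1
  · exfalso
    have e1 : z = z' + 1 := Pinj hH h1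
    have e2 : z + 1 = z' := Pinj hH h2
    have h3 : z + 2 = z + 0 := by
      rw [add_zero]
      conv_rhs => rw [e1, ← e2]
      ring
    exact two_ne_zero_z hn (add_left_cancel h3)

lemma Hedges (hH : H.IsHamiltonianCycle) {e : Sym2 (Fin n → ZMod 4)} (he : e ∈ H.edges) :
    ∃ z : ZMod (4^n), e = s(P H z, P H (z+1)) := by
  rw [edges_eq_range, List.mem_map] at he
  obtain ⟨t, ht, rfl⟩ := he
  rw [List.mem_range, Hlen hH] at ht
  refine ⟨(t : ZMod (4^n)), ?_⟩
  have h1 : P H (t : ZMod (4^n)) = H.getVert t := by rw [P, ZMod.val_cast_of_lt ht]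
  have h2 : P H ((t : ZMod (4^n)) + 1) = H.getVert (t+1) := by
    have hc : ((t : ZMod (4^n)) + 1) = ((t+1 : ℕ) : ZMod (4^n)) := by push_cast; ring
    rcases Nat.lt_or_ge (t+1) (4^n) with h | h
    · rw [P, hc, ZMod.val_cast_of_lt h]
    · have ht1 : t + 1 = 4^n := by omega
      have hv0 : H.getVert (4^n) = v := by rw [← Hlen hH]; exact H.getVert_length
      rw [P, hc, ht1]
      simp [hv0]
  rw [h1, h2]

end PLayer

section BigWalk

variable {n : ℕ} {v : Fin n → ZMod 4} {H : (torusGraph 4 n).Walk v v}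

lemma cast_val_z (z : ZMod (4^n)) : ((z.val : ℕ) : ZMod (4^n)) = z :=
  ZMod.natCast_rightInverse z

/-- The spiral step function on the product. -/
def fB (H : (torusGraph 4 n).Walk v v) (t : ℕ) : Fin (2*n) → ZMod 4 :=
  glue (P H ((((t % (4^n * 4^n)) % 4^n : ℕ) : ZMod (4^n)) -
             (((t % (4^n * 4^n)) / 4^n : ℕ) : ZMod (4^n))))
       (P H (((t % (4^n * 4^n)) / 4^n : ℕ) : ZMod (4^n)))

lemma fB_mod (t : ℕ) : fB H (t % (4^n * 4^n)) = fB H t := by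
  rw [fB, fB, Nat.mod_mod_of_dvd _ dvd_rfl]

lemma fB_eval {a b : ℕ} (ha : a < 4^n) (hb : b < 4^n) :
    fB H (4^n * a + b) = glue (P H ((b : ZMod (4^n)) - a)) (P H a) := by
  have hN : 0 < 4^n := pow_pos (by norm_num) _
  have h1 : 4^n * a + b < 4^n * 4^n := by nlinarith
  rw [fB, Nat.mod_eq_of_lt h1, Nat.mul_add_mod, Nat.mod_eq_of_lt hb,
    Nat.mul_add_div hN, Nat.div_eq_of_lt hb, Nat.add_zero]

lemma fB_zero : fB H 0 = glue (P H 0) (P H 0) := by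
  rw [fB]
  norm_num

lemma fB_L : fB H (4^n * 4^n) = fB H 0 := by
  rw [← fB_mod, Nat.mod_self]

lemma fB_evalN {a : ℕ} (ha : a ≤ 4^n) :
    fB H (4^n * a) = glue (P H (0 - (a : ZMod (4^n)))) (P H a) := by
  rcases eq_or_lt_of_le ha with h | h
  · subst h
    rw [fB_L, fB_zero]
    norm_num
  · have := fB_eval (H := H) h (pow_pos (by norm_num) n : (0:ℕ) < 4^n)
    rw [Nat.add_zero] at this
    rw [this]
    norm_num

lemma fB_adj (hn : 1 ≤ n) (hH : H.IsHamiltonianCycle) :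
    ∀ t < 4^n * 4^n, (torusGraph 4 (2*n)).Adj (fB H t) (fB H (t+1)) := by
  intro t ht
  have hN : 0 < 4^n := pow_pos (by norm_num) _
  set a := t / 4^n with hadef
  set b := t % 4^n with hbdef
  have ha : a < 4^n := Nat.div_lt_iff_lt_mul hN |>.2 (by rw [mul_comm] at ht ⊢; omega)
  have hb : b < 4^n := Nat.mod_lt _ hN
  have hts : t = 4^n * a + b := by
    rw [hadef, hbdef]
    exact (Nat.div_add_mod t (4^n)).symm
  rcases Nat.lt_or_ge (b+1) (4^n) with hb1 | hb1
  · have e1 : fB H t = glue (P H ((b : ZMod (4^n)) - a)) (P H a) := by rw [hts]; exact fB_eval ha hb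
    have e2 : fB H (t+1) = glue (P H (((b+1 : ℕ) : ZMod (4^n)) - a)) (P H a) := by
      rw [hts, show 4^n * a + b + 1 = 4^n * a + (b+1) from rfl]; exact fB_eval ha hb1
    rw [e1, e2]
    have : (((b+1 : ℕ)) : ZMod (4^n)) - a = ((b : ZMod (4^n)) - a) + 1 := by push_cast; ring
    rw [this]
    exact adj_glue_left (Padj hn hH _) _
  · have hbe : b = 4^n - 1 := by omega
    have e1 : fB H t = glue (P H ((b : ZMod (4^n)) - a)) (P H a) := by rw [hts]; exact fB_eval ha hb
    have e2 : fB H (t+1) = glue (P H (0 - ((a+1 : ℕ) : ZMod (4^n)))) (P H ((a+1 : ℕ))) := by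
      rw [hts, show 4^n * a + b + 1 = 4^n * (a+1) by rw [Nat.mul_succ]; omega]
      exact fB_evalN (by omega)
    have hcast : (b : ZMod (4^n)) = ((4^n : ℕ) : ZMod (4^n)) - 1 := by
      rw [hbe, Nat.cast_sub (by omega : 1 ≤ 4^n), Nat.cast_one]
    have hfirst : (b : ZMod (4^n)) - a = 0 - ((a+1 : ℕ) : ZMod (4^n)) := by
      rw [hcast, ZMod.natCast_self]
      push_cast
      ring
    rw [e1, e2, hfirst]
    have hsnd : ((a+1 : ℕ) : ZMod (4^n)) = ((a : ZMod (4^n)) + 1) := by push_cast; ring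
    rw [hsnd]
    exact adj_glue_right (Padj hn hH _) _

lemma fB_inj (hH : H.IsHamiltonianCycle) :
    ∀ t < 4^n * 4^n, ∀ t' < 4^n * 4^n, fB H t = fB H t' → t = t' := by
  intro t ht t' ht' h
  have hN : 0 < 4^n := pow_pos (by norm_num) _
  have ha : t / 4^n < 4^n := Nat.div_lt_iff_lt_mul hN |>.2 (by rw [mul_comm] at ht ⊢; omega)
  have hb : t % 4^n < 4^n := Nat.mod_lt _ hN
  have ha' : t' / 4^n < 4^n := Nat.div_lt_iff_lt_mul hN |>.2 (by rw [mul_comm] at ht' ⊢; omega)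
  have hb' : t' % 4^n < 4^n := Nat.mod_lt _ hN
  have e1 : fB H t = glue (P H ((t % 4^n : ℕ) - ((t / 4^n : ℕ) : ZMod (4^n)))) (P H ((t / 4^n : ℕ))) := by
    conv_lhs => rw [show t = 4^n * (t / 4^n) + t % 4^n from (Nat.div_add_mod t (4^n)).symm]
    exact fB_eval ha hb
  have e1' : fB H t' = glue (P H ((t' % 4^n : ℕ) - ((t' / 4^n : ℕ) : ZMod (4^n)))) (P H ((t' / 4^n : ℕ))) := by
    conv_lhs => rw [show t' = 4^n * (t' / 4^n) + t' % 4^n from (Nat.div_add_mod t' (4^n)).symm]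
    exact fB_eval ha' hb'
  rw [e1, e1'] at h
  obtain ⟨h1, h2⟩ := glue_inj h
  have hq : ((t / 4^n : ℕ) : ZMod (4^n)) = ((t' / 4^n : ℕ) : ZMod (4^n)) := Pinj hH h2
  have hqq : t / 4^n = t' / 4^n := by
    have := congrArg ZMod.val hq
    rwa [ZMod.val_cast_of_lt ha, ZMod.val_cast_of_lt ha'] at this
  have hr : ((t % 4^n : ℕ) : ZMod (4^n)) = ((t' % 4^n : ℕ) : ZMod (4^n)) := by
    have := Pinj hH h1
    rw [hq] at this
    exact sub_left_injective this
  have hrr : t % 4^n = t' % 4^n := by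
    have := congrArg ZMod.val hr
    rwa [ZMod.val_cast_of_lt hb, ZMod.val_cast_of_lt hb'] at this
  have d1 := Nat.div_add_mod t (4^n)
  have d2 := Nat.div_add_mod t' (4^n)
  rw [hqq, hrr] at d1
  omega

end BigWalk

section KWalkSec

variable {n : ℕ} {v : Fin n → ZMod 4} {H : (torusGraph 4 n).Walk v v}

/-- The big spiral walk. -/
def KWalk (H : (torusGraph 4 n).Walk v v)
    (hadj : ∀ t < 4^n * 4^n, (torusGraph 4 (2*n)).Adj (fB H t) (fB H (t+1))) :
    (torusGraph 4 (2*n)).Walk (fB H 0) (fB H 0) :=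
  (mkWalk (fB H) (4^n * 4^n) hadj).copy rfl fB_L

variable {hadj : ∀ t < 4^n * 4^n, (torusGraph 4 (2*n)).Adj (fB H t) (fB H (t+1))}

lemma KWalk_edges :
    (KWalk H hadj).edges = (List.range (4^n * 4^n)).map (fun t => s(fB H t, fB H (t+1))) := by
  rw [KWalk, Walk.edges_copy, mkWalk_edges]

lemma KWalk_support :
    (KWalk H hadj).support = (List.range (4^n * 4^n + 1)).map (fB H) := by
  rw [KWalk, Walk.support_copy, mkWalk_support]

lemma KWalk_length : (KWalk H hadj).length = 4^n * 4^n := by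
  rw [KWalk, Walk.length_copy, mkWalk_length]

lemma L_ge (hn : 1 ≤ n) : 16 ≤ 4^n * 4^n := Nat.mul_le_mul (fourN_ge hn) (fourN_ge hn)

lemma succ_inj (hn : 1 ≤ n) (hH : H.IsHamiltonianCycle) :
    ∀ t < 4^n * 4^n, ∀ t' < 4^n * 4^n, fB H (t+1) = fB H (t'+1) → t = t' := by
  intro t ht t' ht' h
  have hL : 0 < 4^n * 4^n := by have := L_ge hn; omega
  have e : (t+1) % (4^n * 4^n) = (t'+1) % (4^n * 4^n) :=
    fB_inj hH _ (Nat.mod_lt _ hL) _ (Nat.mod_lt _ hL) (by rw [fB_mod, fB_mod, h])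
  rcases Nat.lt_or_ge (t+1) (4^n * 4^n) with h1 | h1 <;>
    rcases Nat.lt_or_ge (t'+1) (4^n * 4^n) with h2 | h2
  · rw [Nat.mod_eq_of_lt h1, Nat.mod_eq_of_lt h2] at e; omega
  · have : t'+1 = 4^n * 4^n := by omega
    rw [Nat.mod_eq_of_lt h1, this, Nat.mod_self] at e; omega
  · have : t+1 = 4^n * 4^n := by omega
    rw [Nat.mod_eq_of_lt h2, this, Nat.mod_self] at e; omega
  · omega

lemma step_inj (hn : 1 ≤ n) (hH : H.IsHamiltonianCycle) :
    ∀ t < 4^n * 4^n, ∀ t' < 4^n * 4^n,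
      s(fB H t, fB H (t+1)) = s(fB H t', fB H (t'+1)) → t = t' := by
  intro t ht t' ht' h
  have hL : 0 < 4^n * 4^n := by have := L_ge hn; omega
  have hL16 := L_ge hn
  rw [Sym2.eq_iff] at h
  rcases h with ⟨h1, _⟩ | ⟨h1, h2⟩
  · exact fB_inj hH t ht t' ht' h1
  · exfalso
    have e1 : t = (t'+1) % (4^n * 4^n) :=
      fB_inj hH t ht _ (Nat.mod_lt _ hL) (by rw [fB_mod]; exact h1)
    have e2 : t' = (t+1) % (4^n * 4^n) :=
      fB_inj hH t' ht' _ (Nat.mod_lt _ hL) (by rw [fB_mod]; exact h2.symm)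
    rcases Nat.lt_or_ge (t'+1) (4^n * 4^n) with hc | hc
    · rw [Nat.mod_eq_of_lt hc] at e1
      rcases Nat.lt_or_ge (t+1) (4^n * 4^n) with hd | hd
      · rw [Nat.mod_eq_of_lt hd] at e2; omega
      · have : t+1 = 4^n * 4^n := by omega
        rw [this, Nat.mod_self] at e2; omega
    · have ht1 : t'+1 = 4^n * 4^n := by omega
      rw [ht1, Nat.mod_self] at e1
      subst e1
      rw [Nat.mod_eq_of_lt (by omega)] at e2
      omega

lemma KWalk_ham (hn : 1 ≤ n) (hH : H.IsHamiltonianCycle) :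
    (KWalk H hadj).IsHamiltonianCycle := by
  have hL : 0 < 4^n * 4^n := by have := L_ge hn; omega
  have htail : (KWalk H hadj).support.tail
      = (List.range (4^n * 4^n)).map (fB H ∘ Nat.succ) := by
    rw [KWalk_support, List.range_succ_eq_map, List.map_cons, List.map_map, List.tail_cons]
  have htail_nodup : ((KWalk (v := v) H hadj).support.tail).Nodup := by
    rw [htail]
    refine List.Nodup.map_on ?_ List.nodup_range
    intro x hx y hy hxy
    exact succ_inj hn hH x (List.mem_range.1 hx) y (List.mem_range.1 hy) hxy
  rw [Walk.isHamiltonianCycle_iff_isCycle_and_support_count_tail_eq_one]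
  constructor
  · refine ⟨⟨⟨?_⟩, ?_⟩, ?_⟩
    · rw [KWalk_edges]
      refine List.Nodup.map_on ?_ List.nodup_range
      intro x hx y hy hxy
      exact step_inj hn hH x (List.mem_range.1 hx) y (List.mem_range.1 hy) hxy
    · intro hc
      have := congrArg Walk.length hc
      rw [KWalk_length] at this
      simp only [Walk.length_nil] at this
      omega
    · exact htail_nodup
  · intro x
    rw [htail]
    apply List.count_eq_one_of_mem
    · rw [htail] at htail_nodup; exact htail_nodup
    · obtain ⟨z, hz⟩ := Psurj hH (fun i => x (eq2 n (.inl i)))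
      obtain ⟨q, hq⟩ := Psurj hH (fun i => x (eq2 n (.inr i)))
      have hx : glue (P H z) (P H q) = x := by rw [hz, hq]; exact glue_eta x
      have hqv : q.val < 4^n := q.val_lt
      have hzv : (z+q).val < 4^n := (z+q).val_lt
      set t := 4^n * q.val + (z+q).val with htdef
      have ht : t < 4^n * 4^n := by
        calc t = 4^n * q.val + (z+q).val := htdef
        _ < 4^n * q.val + 4^n := by omega
        _ = 4^n * (q.val + 1) := by rw [Nat.mul_succ]
        _ ≤ 4^n * 4^n := Nat.mul_le_mul_left _ (by omega)
      have hfBt : fB H t = x := by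
        rw [htdef, fB_eval hqv hzv, cast_val_z, cast_val_z, show z + q - q = z by ring, hx]
      rw [List.mem_map]
      rcases Nat.eq_zero_or_pos t with h0 | h0
      · refine ⟨4^n * 4^n - 1, List.mem_range.2 (by omega), ?_⟩
        simp only [Function.comp_apply, Nat.succ_eq_add_one]
        rw [show (4^n * 4^n - 1) + 1 = 4^n * 4^n by omega, fB_L, ← hfBt, h0]
      · refine ⟨t - 1, List.mem_range.2 (by omega), ?_⟩
        simp only [Function.comp_apply, Nat.succ_eq_add_one]
        rw [show t - 1 + 1 = t by omega, hfBt]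

end KWalkSec

section Shape

variable {n : ℕ} {v : Fin n → ZMod 4} {H : (torusGraph 4 n).Walk v v}
variable {hadj : ∀ t < 4^n * 4^n, (torusGraph 4 (2*n)).Adj (fB H t) (fB H (t+1))}

/-- A "first block" edge of the product. -/
def E1 (H : (torusGraph 4 n).Walk v v) (g : (Fin n → ZMod 4) → (Fin n → ZMod 4))
    (z q : ZMod (4^n)) : Sym2 (Fin (2*n) → ZMod 4) :=
  s(glue (g (P H z)) (g (P H q)), glue (g (P H (z+1))) (g (P H q)))

/-- A "second block" edge of the product. -/
def E2 (H : (torusGraph 4 n).Walk v v) (g : (Fin n → ZMod 4) → (Fin n → ZMod 4))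
    (z q : ZMod (4^n)) : Sym2 (Fin (2*n) → ZMod 4) :=
  s(glue (g (P H q)) (g (P H z)), glue (g (P H q)) (g (P H (z+1))))

lemma one_ne_zero_z (hn : 1 ≤ n) : (1 : ZMod (4^n)) ≠ 0 := by
  haveI : Fact (1 < 4^n) := ⟨by have := fourN_ge hn; omega⟩
  intro h
  have := congrArg ZMod.val h
  rw [ZMod.val_one, ZMod.val_zero] at this
  omega

lemma P_ne_succ (hn : 1 ≤ n) (hH : H.IsHamiltonianCycle) (z : ZMod (4^n)) :
    P H z ≠ P H (z+1) := by
  intro h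
  have e := Pinj hH h
  exact one_ne_zero_z hn (by linear_combination -e)

lemma KWalk_shape (hn : 1 ≤ n) (hH : H.IsHamiltonianCycle) {e : Sym2 (Fin (2*n) → ZMod 4)}
    (he : e ∈ (KWalk H hadj).edges) :
    ∃ z q : ZMod (4^n),
      (z + q + 1 ≠ 0 ∧ e = E1 H id z q) ∨ (z + q + 1 = 0 ∧ e = E2 H id z q) := by
  rw [KWalk_edges, List.mem_map] at he
  obtain ⟨t, htm, rfl⟩ := he
  have ht : t < 4^n * 4^n := List.mem_range.1 htm
  have hN : 0 < 4^n := pow_pos (by norm_num) _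
  set a := t / 4^n with hadef
  set b := t % 4^n with hbdef
  have ha : a < 4^n := Nat.div_lt_iff_lt_mul hN |>.2 (by rw [mul_comm] at ht ⊢; omega)
  have hb : b < 4^n := Nat.mod_lt _ hN
  have hts : t = 4^n * a + b := by
    rw [hadef, hbdef]
    exact (Nat.div_add_mod t (4^n)).symm
  have e1 : fB H t = glue (P H ((b : ZMod (4^n)) - a)) (P H a) := by rw [hts]; exact fB_eval ha hb
  rcases Nat.lt_or_ge (b+1) (4^n) with hb1 | hb1
  · refine ⟨(b : ZMod (4^n)) - a, (a : ZMod (4^n)), Or.inl ⟨?_, ?_⟩⟩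
    · have : (b : ZMod (4^n)) - a + a + 1 = ((b+1 : ℕ) : ZMod (4^n)) := by push_cast; ring
      rw [this]
      intro hc
      have := congrArg ZMod.val hc
      rw [ZMod.val_cast_of_lt hb1, ZMod.val_zero] at this
      omega
    · have e2 : fB H (t+1) = glue (P H (((b+1 : ℕ) : ZMod (4^n)) - a)) (P H a) := by
        rw [hts, show 4^n * a + b + 1 = 4^n * a + (b+1) from rfl]; exact fB_eval ha hb1
      rw [e1, e2, E1]
      have : (((b+1 : ℕ)) : ZMod (4^n)) - a = ((b : ZMod (4^n)) - a) + 1 := by push_cast; ring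
      rw [this]
      simp only [id_eq]
  · have hbe : b = 4^n - 1 := by omega
    refine ⟨(a : ZMod (4^n)), -1 - a, Or.inr ⟨by ring, ?_⟩⟩
    have e2 : fB H (t+1) = glue (P H (0 - ((a+1 : ℕ) : ZMod (4^n)))) (P H ((a+1 : ℕ))) := by
      rw [hts, show 4^n * a + b + 1 = 4^n * (a+1) by rw [Nat.mul_succ]; omega]
      exact fB_evalN (by omega)
    have hcast : (b : ZMod (4^n)) = ((4^n : ℕ) : ZMod (4^n)) - 1 := by
      rw [hbe, Nat.cast_sub (by omega : 1 ≤ 4^n), Nat.cast_one]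
    have hfirst : (b : ZMod (4^n)) - a = -1 - a := by
      rw [hcast, ZMod.natCast_self]; ring
    have hsecond : 0 - ((a+1 : ℕ) : ZMod (4^n)) = -1 - a := by push_cast; ring
    have hthird : ((a+1 : ℕ) : ZMod (4^n)) = (a : ZMod (4^n)) + 1 := by push_cast; ring
    rw [e1, e2, hfirst, hsecond, hthird, E2]
    simp only [id_eq]

lemma E1_mem (hn : 1 ≤ n) (hH : H.IsHamiltonianCycle) {z q : ZMod (4^n)}
    (hzq : z + q + 1 ≠ 0) : E1 H id z q ∈ (KWalk H hadj).edges := by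
  have hN : 0 < 4^n := pow_pos (by norm_num) _
  have hqv : q.val < 4^n := q.val_lt
  have hzv : (z+q).val < 4^n := (z+q).val_lt
  have hzv1 : (z+q).val + 1 < 4^n := by
    rcases Nat.lt_or_ge ((z+q).val + 1) (4^n) with h | h
    · exact h
    · exfalso
      apply hzq
      have hv : (z+q).val = 4^n - 1 := by omega
      have : z + q = ((4^n - 1 : ℕ) : ZMod (4^n)) := by rw [← hv, cast_val_z]
      rw [show z + q + 1 = (z+q) + 1 from rfl, this,
        Nat.cast_sub (by omega : 1 ≤ 4^n), Nat.cast_one, ZMod.natCast_self]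
      ring
  set t := 4^n * q.val + (z+q).val with htdef
  have ht : t < 4^n * 4^n := by
    calc t = 4^n * q.val + (z+q).val := htdef
    _ < 4^n * q.val + 4^n := by omega
    _ = 4^n * (q.val + 1) := by rw [Nat.mul_succ]
    _ ≤ 4^n * 4^n := Nat.mul_le_mul_left _ (by omega)
  rw [KWalk_edges, List.mem_map]
  refine ⟨t, List.mem_range.2 ht, ?_⟩
  have hfBt : fB H t = glue (P H z) (P H q) := by
    rw [htdef, fB_eval hqv hzv, cast_val_z, cast_val_z, show z + q - q = z by ring]
  have hfBt1 : fB H (t+1) = glue (P H (z+1)) (P H q) := by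
    rw [htdef, show 4^n * q.val + (z+q).val + 1 = 4^n * q.val + ((z+q).val + 1) from rfl,
      fB_eval hqv hzv1, cast_val_z]
    have : (((z+q).val + 1 : ℕ) : ZMod (4^n)) - q = z + 1 := by
      push_cast [cast_val_z]; ring
    rw [this]
  rw [hfBt, hfBt1, E1]
  simp only [id_eq]

lemma E2_mem (hn : 1 ≤ n) (hH : H.IsHamiltonianCycle) {z q : ZMod (4^n)}
    (hzq : z + q + 1 = 0) : E2 H id z q ∈ (KWalk H hadj).edges := by
  have hN : 0 < 4^n := pow_pos (by norm_num) _
  have h4 := fourN_ge hn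
  have hzv : z.val < 4^n := z.val_lt
  have hq : q = -1 - z := by linear_combination hzq
  set t := 4^n * z.val + (4^n - 1) with htdef
  have ht : t < 4^n * 4^n := by
    calc t = 4^n * z.val + (4^n - 1) := htdef
    _ < 4^n * z.val + 4^n := by omega
    _ = 4^n * (z.val + 1) := by rw [Nat.mul_succ]
    _ ≤ 4^n * 4^n := Nat.mul_le_mul_left _ (by omega)
  rw [KWalk_edges, List.mem_map]
  refine ⟨t, List.mem_range.2 ht, ?_⟩
  have hfBt : fB H t = glue (P H q) (P H z) := by
    rw [htdef, fB_eval hzv (by omega : 4^n - 1 < 4^n), cast_val_z]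
    have : ((4^n - 1 : ℕ) : ZMod (4^n)) - z = q := by
      rw [Nat.cast_sub (by omega : 1 ≤ 4^n), Nat.cast_one, ZMod.natCast_self, hq]; ring
    rw [this]
  have hfBt1 : fB H (t+1) = glue (P H q) (P H (z+1)) := by
    rw [htdef, show 4^n * z.val + (4^n - 1) + 1 = 4^n * (z.val + 1) by rw [Nat.mul_succ]; omega,
      fB_evalN (by omega : z.val + 1 ≤ 4^n)]
    have h1 : ((z.val + 1 : ℕ) : ZMod (4^n)) = z + 1 := by push_cast [cast_val_z]; ring
    have h2 : 0 - ((z.val + 1 : ℕ) : ZMod (4^n)) = q := by rw [h1, hq]; ring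
    rw [h2, h1]
  rw [hfBt, hfBt1, E2]
  simp only [id_eq]

lemma map_E1_b (ρ : Equiv.Perm (Fin n)) (z q : ZMod (4^n)) :
    Sym2.map (mapFun 4 (2*n) (bperm n ρ)) (E1 H id z q) = E1 H (mapFun 4 n ρ) z q := by
  simp only [E1, Sym2.map_pair_eq, id_eq, mapFun_bperm]

lemma map_E2_b (ρ : Equiv.Perm (Fin n)) (z q : ZMod (4^n)) :
    Sym2.map (mapFun 4 (2*n) (bperm n ρ)) (E2 H id z q) = E2 H (mapFun 4 n ρ) z q := by
  simp only [E2, Sym2.map_pair_eq, id_eq, mapFun_bperm]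

lemma map_E1_bs (ρ : Equiv.Perm (Fin n)) (z q : ZMod (4^n)) :
    Sym2.map (mapFun 4 (2*n) (bperm n ρ * swp n)) (E1 H id z q) = E2 H (mapFun 4 n ρ) z q := by
  simp only [E1, E2, Sym2.map_pair_eq, id_eq, mapFun_mul, mapFun_swp, mapFun_bperm]

lemma map_E2_bs (ρ : Equiv.Perm (Fin n)) (z q : ZMod (4^n)) :
    Sym2.map (mapFun 4 (2*n) (bperm n ρ * swp n)) (E2 H id z q) = E1 H (mapFun 4 n ρ) z q := by
  simp only [E1, E2, Sym2.map_pair_eq, id_eq, mapFun_mul, mapFun_swp, mapFun_bperm]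

lemma E_proj (hn : 1 ≤ n) (hH : H.IsHamiltonianCycle) (ρ : Equiv.Perm (Fin n))
    (z : ZMod (4^n)) :
    s(mapFun 4 n ρ (P H z), mapFun 4 n ρ (P H (z+1)))
      ∈ (H.map (permIso 4 n ρ).toHom).edges := by
  rw [Walk.edges_map, List.mem_map]
  exact ⟨s(P H z, P H (z+1)), Pstep hn hH z, by rw [Sym2.map_pair_eq]; rfl⟩

lemma E1_ne_E2 (hn : 1 ≤ n) (hH : H.IsHamiltonianCycle)
    {g g' : (Fin n → ZMod 4) → (Fin n → ZMod 4)} (hg : Function.Injective g)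
    {z q z' q' : ZMod (4^n)} : E1 H g z q ≠ E2 H g' z' q' := by
  intro h
  rw [E1, E2, Sym2.eq_iff] at h
  have key : g (P H z) = g (P H (z+1)) := by
    rcases h with ⟨h1, h2⟩ | ⟨h1, h2⟩
    · have e1 := (glue_inj h1).1
      have e2 := (glue_inj h2).1
      rw [e1, ← e2]
    · have e1 := (glue_inj h1).1
      have e2 := (glue_inj h2).1
      rw [e1, ← e2]
  exact P_ne_succ hn hH z (hg key)

lemma E1_eq_E1 (hn : 1 ≤ n) (hH : H.IsHamiltonianCycle)
    {g g' : (Fin n → ZMod 4) → (Fin n → ZMod 4)}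
    {z q z' q' : ZMod (4^n)} (h : E1 H g z q = E1 H g' z' q') :
    s(g (P H z), g (P H (z+1))) = s(g' (P H z'), g' (P H (z'+1)))
      ∧ g (P H q) = g' (P H q') := by
  rw [E1, E1, Sym2.eq_iff] at h
  rcases h with ⟨h1, h2⟩ | ⟨h1, h2⟩
  · exact ⟨by rw [Sym2.eq_iff]; exact Or.inl ⟨(glue_inj h1).1, (glue_inj h2).1⟩,
      (glue_inj h1).2⟩
  · exact ⟨by rw [Sym2.eq_iff]; exact Or.inr ⟨(glue_inj h1).1, (glue_inj h2).1⟩,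
      (glue_inj h1).2⟩

lemma E2_eq_E2 (hn : 1 ≤ n) (hH : H.IsHamiltonianCycle)
    {g g' : (Fin n → ZMod 4) → (Fin n → ZMod 4)}
    {z q z' q' : ZMod (4^n)} (h : E2 H g z q = E2 H g' z' q') :
    s(g (P H z), g (P H (z+1))) = s(g' (P H z'), g' (P H (z'+1)))
      ∧ g (P H q) = g' (P H q') := by
  rw [E2, E2, Sym2.eq_iff] at h
  rcases h with ⟨h1, h2⟩ | ⟨h1, h2⟩
  · exact ⟨by rw [Sym2.eq_iff]; exact Or.inl ⟨(glue_inj h1).2, (glue_inj h2).2⟩,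
      (glue_inj h1).1⟩
  · exact ⟨by rw [Sym2.eq_iff]; exact Or.inr ⟨(glue_inj h1).2, (glue_inj h2).2⟩,
      (glue_inj h1).1⟩

lemma proj_pair_inj (hn : 1 ≤ n) (hH : H.IsHamiltonianCycle)
    {g : (Fin n → ZMod 4) → (Fin n → ZMod 4)} (hg : Function.Injective g)
    {z z' : ZMod (4^n)}
    (h : s(g (P H z), g (P H (z+1))) = s(g (P H z'), g (P H (z'+1)))) : z = z' := by
  apply PedgeInj hn hH
  rw [Sym2.eq_iff] at h ⊢
  rcases h with ⟨h1, h2⟩ | ⟨h1, h2⟩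
  · exact Or.inl ⟨hg h1, hg h2⟩
  · exact Or.inr ⟨hg h1, hg h2⟩

end Shape

section TauSec

variable {n : ℕ}

lemma bperm_apply_inl (ρ : Equiv.Perm (Fin n)) (b : Fin n) :
    bperm n ρ (eq2 n (.inl b)) = eq2 n (.inl (ρ b)) := by
  simp [bperm, Equiv.permCongr_apply]

lemma bperm_apply_inr (ρ : Equiv.Perm (Fin n)) (b : Fin n) :
    bperm n ρ (eq2 n (.inr b)) = eq2 n (.inr (ρ b)) := by
  simp [bperm, Equiv.permCongr_apply]

lemma swp_apply_inl (b : Fin n) : swp n (eq2 n (.inl b)) = eq2 n (.inr b) := by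
  simp [swp, Equiv.permCongr_apply]

lemma swp_apply_inr (b : Fin n) : swp n (eq2 n (.inr b)) = eq2 n (.inl b) := by
  simp [swp, Equiv.permCongr_apply]

lemma bperm_one : bperm n 1 = 1 := by
  ext j
  obtain ⟨s, rfl⟩ : ∃ s, j = eq2 n s := ⟨(eq2 n).symm j, by simp⟩
  cases s with
  | inl b => rw [show (1 : Equiv.Perm (Fin (2*n))) (eq2 n (.inl b)) = eq2 n (.inl b) from rfl,
      bperm_apply_inl]; rfl
  | inr b => rw [show (1 : Equiv.Perm (Fin (2*n))) (eq2 n (.inr b)) = eq2 n (.inr b) from rfl,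
      bperm_apply_inr]; rfl

lemma eq2_inl_zero (hn : 0 < n) (h2n : 0 < 2*n) :
    eq2 n (.inl ⟨0, hn⟩) = (⟨0, h2n⟩ : Fin (2*n)) := by
  apply Fin.ext
  simp [eq2]

end TauSec

section Helpers

variable {n : ℕ} {v : Fin n → ZMod 4} {H : (torusGraph 4 n).Walk v v}

lemma mapFun_surj (m k : ℕ) (τ : Equiv.Perm (Fin k)) : Function.Surjective (mapFun m k τ) :=
  fun y => ⟨y ∘ τ.symm.symm, by funext j; simp [mapFun]⟩

lemma no_cross1 (hn : 1 ≤ n) (hH : H.IsHamiltonianCycle) (σ : Fin n → Equiv.Perm (Fin n))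
    (hDisj : ∀ i j, i ≠ j → ∀ e, e ∈ (H.map (permIso 4 n (σ i)).toHom).edges
      → e ∉ (H.map (permIso 4 n (σ j)).toHom).edges)
    {i i' : Fin n} (hii : i ≠ i') {z q z' q' : ZMod (4^n)}
    (h : E1 H (mapFun 4 n (σ i)) z q = E1 H (mapFun 4 n (σ i')) z' q') : False := by
  have hp := (E1_eq_E1 hn hH h).1
  exact hDisj i i' hii _ (E_proj hn hH (σ i) z) (hp ▸ E_proj hn hH (σ i') z')

lemma no_cross2 (hn : 1 ≤ n) (hH : H.IsHamiltonianCycle) (σ : Fin n → Equiv.Perm (Fin n))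
    (hDisj : ∀ i j, i ≠ j → ∀ e, e ∈ (H.map (permIso 4 n (σ i)).toHom).edges
      → e ∉ (H.map (permIso 4 n (σ j)).toHom).edges)
    {i i' : Fin n} (hii : i ≠ i') {z q z' q' : ZMod (4^n)}
    (h : E2 H (mapFun 4 n (σ i)) z q = E2 H (mapFun 4 n (σ i')) z' q') : False := by
  have hp := (E2_eq_E2 hn hH h).1
  exact hDisj i i' hii _ (E_proj hn hH (σ i) z) (hp ▸ E_proj hn hH (σ i') z')

lemma same_E1 (hn : 1 ≤ n) (hH : H.IsHamiltonianCycle) (ρ : Equiv.Perm (Fin n))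
    {z q z' q' : ZMod (4^n)}
    (h : E1 H (mapFun 4 n ρ) z q = E1 H (mapFun 4 n ρ) z' q') : z = z' ∧ q = q' := by
  obtain ⟨hp, hq⟩ := E1_eq_E1 hn hH h
  exact ⟨proj_pair_inj hn hH (mapFun_inj 4 n ρ) hp, Pinj hH (mapFun_inj 4 n ρ hq)⟩

lemma same_E2 (hn : 1 ≤ n) (hH : H.IsHamiltonianCycle) (ρ : Equiv.Perm (Fin n))
    {z q z' q' : ZMod (4^n)}
    (h : E2 H (mapFun 4 n ρ) z q = E2 H (mapFun 4 n ρ) z' q') : z = z' ∧ q = q' := by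
  obtain ⟨hp, hq⟩ := E2_eq_E2 hn hH h
  exact ⟨proj_pair_inj hn hH (mapFun_inj 4 n ρ) hp, Pinj hH (mapFun_inj 4 n ρ hq)⟩

end Helpers

end SCDouble

open SCDouble in
/-- For every `n ≥ 1`: if `C₄^{□n} ≅ Q_{2n}` has a source cycle (a Latin Hamilton
decomposition), then so does `C₄^{□2n} ≅ Q_{4n}`. -/


theorem sourceCycle_double (n : ℕ) (hn : 1 ≤ n) (h : HasSourceCycle 4 n) :
    HasSourceCycle 4 (2 * n) := by
  classical
  obtain ⟨v, H, σ, hσ0, hσcol, hHam, hDisj, hCover⟩ := h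
  have hn0 : 0 < n := hn
  simp only at hHam hDisj hCover
  have hH : H.IsHamiltonianCycle := by
    have h1 := hHam ⟨0, hn0⟩
    rw [hσ0 hn0] at h1
    have hid : (permIso 4 n 1).toHom = SimpleGraph.Hom.id := by
      apply DFunLike.ext
      intro x
      rfl
    rwa [hid, Walk.map_id] at h1
  set τ : Fin (2*n) → Equiv.Perm (Fin (2*n)) := fun j =>
    Sum.elim (fun i => bperm n (σ i)) (fun i => bperm n (σ i) * swp n)
      ((eq2 n).symm j) with hτ
  have hτ_inl : ∀ i : Fin n, τ (eq2 n (.inl i)) = bperm n (σ i) := by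
    intro i
    rw [hτ]
    simp only [Equiv.symm_apply_apply, Sum.elim_inl]
  have hτ_inr : ∀ i : Fin n, τ (eq2 n (.inr i)) = bperm n (σ i) * swp n := by
    intro i
    rw [hτ]
    simp only [Equiv.symm_apply_apply, Sum.elim_inr]
  refine ⟨fB H 0, KWalk H (fB_adj hn hH), τ, ?_, ?_, ?_, ?_, ?_⟩
  · -- τ at index 0 is the identity
    intro h2n
    have hsymm : (⟨0, h2n⟩ : Fin (2*n)) = eq2 n (.inl ⟨0, hn0⟩) := (eq2_inl_zero hn0 h2n).symm
    rw [hsymm, hτ_inl, hσ0 hn0, bperm_one]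
  · -- columns are bijective
    intro jcol
    apply Finite.injective_iff_bijective.1
    intro i i' hii
    obtain ⟨si, rfl⟩ : ∃ s, i = eq2 n s := ⟨(eq2 n).symm i, by simp⟩
    obtain ⟨si', rfl⟩ : ∃ s, i' = eq2 n s := ⟨(eq2 n).symm i', by simp⟩
    obtain ⟨sc, rfl⟩ : ∃ s, jcol = eq2 n s := ⟨(eq2 n).symm jcol, by simp⟩
    have hcol := fun (b : Fin n) => (hσcol b).1
    rcases si with a | a <;> rcases si' with a' | a' <;> rcases sc with b | b <;>
      simp only [hτ_inl, hτ_inr, Equiv.Perm.mul_apply, bperm_apply_inl, bperm_apply_inr,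
        swp_apply_inl, swp_apply_inr] at hii <;>
      have := (eq2 n).injective hii
    · have ha : a = a' := hcol b (Sum.inl_injective this)
      rw [ha]
    · have ha : a = a' := hcol b (Sum.inr_injective this)
      rw [ha]
    · simp at this
    · simp at this
    · simp at this
    · simp at this
    · have ha : a = a' := hcol b (Sum.inr_injective this)
      rw [ha]
    · have ha : a = a' := hcol b (Sum.inl_injective this)
      rw [ha]
  · -- each cycle is Hamiltonian
    intro j
    exact Walk.IsHamiltonianCycle.map (permIso 4 (2*n) (τ j)).toEquiv.bijective (KWalk_ham hn hH)
  · -- pairwise edge-disjoint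
    have shape : ∀ (j : Fin (2*n)) (e : Sym2 (Fin (2*n) → ZMod 4)),
        e ∈ ((KWalk H (fB_adj hn hH)).map (permIso 4 (2*n) (τ j)).toHom).edges →
        ∃ (i : Fin n) (z q : ZMod (4^n)),
          (j = eq2 n (.inl i) ∧
            ((z+q+1 ≠ 0 ∧ e = E1 H (mapFun 4 n (σ i)) z q) ∨
             (z+q+1 = 0 ∧ e = E2 H (mapFun 4 n (σ i)) z q)))
          ∨ (j = eq2 n (.inr i) ∧
            ((z+q+1 = 0 ∧ e = E1 H (mapFun 4 n (σ i)) z q) ∨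
             (z+q+1 ≠ 0 ∧ e = E2 H (mapFun 4 n (σ i)) z q))) := by
      intro j e he
      rw [Walk.edges_map, List.mem_map] at he
      obtain ⟨e0, he0, rfl⟩ := he
      obtain ⟨z, q, hc⟩ := KWalk_shape hn hH he0
      have hcoe : ⇑(permIso 4 (2*n) (τ j)).toHom = mapFun 4 (2*n) (τ j) := rfl
      obtain ⟨sj, rfl⟩ : ∃ s, j = eq2 n s := ⟨(eq2 n).symm j, by simp⟩
      rcases sj with i | i
      · refine ⟨i, z, q, Or.inl ⟨rfl, ?_⟩⟩
        rcases hc with ⟨ht, rfl⟩ | ⟨ht, rfl⟩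
        · exact Or.inl ⟨ht, by rw [hcoe, hτ_inl, map_E1_b]⟩
        · exact Or.inr ⟨ht, by rw [hcoe, hτ_inl, map_E2_b]⟩
      · refine ⟨i, z, q, Or.inr ⟨rfl, ?_⟩⟩
        rcases hc with ⟨ht, rfl⟩ | ⟨ht, rfl⟩
        · exact Or.inr ⟨ht, by rw [hcoe, hτ_inr, map_E1_bs]⟩
        · exact Or.inl ⟨ht, by rw [hcoe, hτ_inr, map_E2_bs]⟩
    intro a b hab e hea heb
    simp only at hea heb
    obtain ⟨ia, za, qa, ha⟩ := shape a e hea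
    obtain ⟨ib, zb, qb, hb⟩ := shape b e heb
    rcases ha with ⟨rfl, hca⟩ | ⟨rfl, hca⟩ <;> rcases hb with ⟨rfl, hcb⟩ | ⟨rfl, hcb⟩ <;>
      by_cases hi : ia = ib
    · exact hab (by rw [hi])
    · rcases hca with ⟨ta, hea'⟩ | ⟨ta, hea'⟩ <;> rcases hcb with ⟨tb, heb'⟩ | ⟨tb, heb'⟩
      · exact no_cross1 hn hH σ hDisj hi (hea'.symm.trans heb')
      · exact E1_ne_E2 hn hH (mapFun_inj 4 n (σ ia)) (hea'.symm.trans heb')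
      · exact E1_ne_E2 hn hH (mapFun_inj 4 n (σ ib)) (heb'.symm.trans hea')
      · exact no_cross2 hn hH σ hDisj hi (hea'.symm.trans heb')
    · subst hi
      rcases hca with ⟨ta, hea'⟩ | ⟨ta, hea'⟩ <;> rcases hcb with ⟨tb, heb'⟩ | ⟨tb, heb'⟩
      · obtain ⟨hz, hq⟩ := same_E1 hn hH (σ ia) (hea'.symm.trans heb')
        rw [hz, hq] at ta
        exact ta tb
      · exact E1_ne_E2 hn hH (mapFun_inj 4 n (σ ia)) (hea'.symm.trans heb')
      · exact E1_ne_E2 hn hH (mapFun_inj 4 n (σ ia)) (heb'.symm.trans hea')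
      · obtain ⟨hz, hq⟩ := same_E2 hn hH (σ ia) (hea'.symm.trans heb')
        rw [hz, hq] at ta
        exact tb ta
    · rcases hca with ⟨ta, hea'⟩ | ⟨ta, hea'⟩ <;> rcases hcb with ⟨tb, heb'⟩ | ⟨tb, heb'⟩
      · exact no_cross1 hn hH σ hDisj hi (hea'.symm.trans heb')
      · exact E1_ne_E2 hn hH (mapFun_inj 4 n (σ ia)) (hea'.symm.trans heb')
      · exact E1_ne_E2 hn hH (mapFun_inj 4 n (σ ib)) (heb'.symm.trans hea')
      · exact no_cross2 hn hH σ hDisj hi (hea'.symm.trans heb')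
    · subst hi
      rcases hca with ⟨ta, hea'⟩ | ⟨ta, hea'⟩ <;> rcases hcb with ⟨tb, heb'⟩ | ⟨tb, heb'⟩
      · obtain ⟨hz, hq⟩ := same_E1 hn hH (σ ia) (hea'.symm.trans heb')
        rw [hz, hq] at ta
        exact tb ta
      · exact E1_ne_E2 hn hH (mapFun_inj 4 n (σ ia)) (hea'.symm.trans heb')
      · exact E1_ne_E2 hn hH (mapFun_inj 4 n (σ ia)) (heb'.symm.trans hea')
      · obtain ⟨hz, hq⟩ := same_E2 hn hH (σ ia) (hea'.symm.trans heb')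
        rw [hz, hq] at ta
        exact ta tb
    · rcases hca with ⟨ta, hea'⟩ | ⟨ta, hea'⟩ <;> rcases hcb with ⟨tb, heb'⟩ | ⟨tb, heb'⟩
      · exact no_cross1 hn hH σ hDisj hi (hea'.symm.trans heb')
      · exact E1_ne_E2 hn hH (mapFun_inj 4 n (σ ia)) (hea'.symm.trans heb')
      · exact E1_ne_E2 hn hH (mapFun_inj 4 n (σ ib)) (heb'.symm.trans hea')
      · exact no_cross2 hn hH σ hDisj hi (hea'.symm.trans heb')
    · exact hab (by rw [hi])
    · rcases hca with ⟨ta, hea'⟩ | ⟨ta, hea'⟩ <;> rcases hcb with ⟨tb, heb'⟩ | ⟨tb, heb'⟩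
      · exact no_cross1 hn hH σ hDisj hi (hea'.symm.trans heb')
      · exact E1_ne_E2 hn hH (mapFun_inj 4 n (σ ia)) (hea'.symm.trans heb')
      · exact E1_ne_E2 hn hH (mapFun_inj 4 n (σ ib)) (heb'.symm.trans hea')
      · exact no_cross2 hn hH σ hDisj hi (hea'.symm.trans heb')
  · -- covers all edges
    intro e he
    induction e with
    | _ u w =>
    rw [SimpleGraph.mem_edgeSet] at he
    obtain ⟨j0, ⟨hne, hpm⟩, hrest⟩ := he
    obtain ⟨s0, rfl⟩ : ∃ s, j0 = eq2 n s := ⟨(eq2 n).symm j0, by simp⟩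
    have hu : glue (fun i => u (eq2 n (.inl i))) (fun i => u (eq2 n (.inr i))) = u := glue_eta u
    have hw : glue (fun i => w (eq2 n (.inl i))) (fun i => w (eq2 n (.inr i))) = w := glue_eta w
    rcases s0 with i0 | i0
    · -- the edge lies in the first block
      have hsame : (fun i => u (eq2 n (.inr i))) = (fun i => w (eq2 n (.inr i))) := by
        funext i
        refine hrest (eq2 n (.inr i)) ?_
        intro hc
        exact absurd ((eq2 n).injective hc) (by simp)
      have hadj1 : (torusGraph 4 n).Adj (fun i => u (eq2 n (.inl i)))
          (fun i => w (eq2 n (.inl i))) := by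
        refine ⟨i0, ⟨hne, hpm⟩, ?_⟩
        intro i hi
        refine hrest (eq2 n (.inl i)) ?_
        intro hc
        exact hi (Sum.inl_injective ((eq2 n).injective hc))
      obtain ⟨i, hei⟩ := hCover _ ((SimpleGraph.mem_edgeSet (torusGraph 4 n)).2 hadj1)
      rw [Walk.edges_map, List.mem_map] at hei
      obtain ⟨e0, he0, hmape⟩ := hei
      obtain ⟨z, rfl⟩ := Hedges hH he0
      rw [Sym2.map_pair_eq] at hmape
      have hmape' : s(mapFun 4 n (σ i) (P H z), mapFun 4 n (σ i) (P H (z+1)))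
          = s((fun i' => u (eq2 n (.inl i'))), (fun i' => w (eq2 n (.inl i')))) := hmape
      obtain ⟨y, hy⟩ := mapFun_surj 4 n (σ i) (fun i' => u (eq2 n (.inr i')))
      obtain ⟨q, rfl⟩ := Psurj hH y
      have hkey : s(u, w) = E1 H (mapFun 4 n (σ i)) z q := by
        rw [Sym2.eq_iff] at hmape'
        rcases hmape' with ⟨h1, h2⟩ | ⟨h1, h2⟩
        · have hueq : glue (mapFun 4 n (σ i) (P H z)) (mapFun 4 n (σ i) (P H q)) = u := by
            rw [h1, hy]; exact hu
          have hweq : glue (mapFun 4 n (σ i) (P H (z+1))) (mapFun 4 n (σ i) (P H q)) = w := by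
            rw [h2, hy, hsame]; exact hw
          rw [E1, hueq, hweq]
        · have hueq : glue (mapFun 4 n (σ i) (P H (z+1))) (mapFun 4 n (σ i) (P H q)) = u := by
            rw [h2, hy]; exact hu
          have hweq : glue (mapFun 4 n (σ i) (P H z)) (mapFun 4 n (σ i) (P H q)) = w := by
            rw [h1, hy, hsame]; exact hw
          rw [E1, hueq, hweq, Sym2.eq_swap]
      rcases eq_or_ne (z + q + 1) 0 with htag | htag
      · refine ⟨eq2 n (.inr i), ?_⟩
        simp only
        rw [Walk.edges_map, List.mem_map]
        refine ⟨E2 H id z q, E2_mem hn hH htag, ?_⟩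
        have hmm : Sym2.map (mapFun 4 (2*n) (τ (eq2 n (.inr i)))) (E2 H id z q)
            = E1 H (mapFun 4 n (σ i)) z q := by rw [hτ_inr, map_E2_bs]
        exact hmm.trans hkey.symm
      · refine ⟨eq2 n (.inl i), ?_⟩
        simp only
        rw [Walk.edges_map, List.mem_map]
        refine ⟨E1 H id z q, E1_mem hn hH htag, ?_⟩
        have hmm : Sym2.map (mapFun 4 (2*n) (τ (eq2 n (.inl i)))) (E1 H id z q)
            = E1 H (mapFun 4 n (σ i)) z q := by rw [hτ_inl, map_E1_b]
        exact hmm.trans hkey.symm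
    · -- the edge lies in the second block
      have hsame : (fun i => u (eq2 n (.inl i))) = (fun i => w (eq2 n (.inl i))) := by
        funext i
        refine hrest (eq2 n (.inl i)) ?_
        intro hc
        exact absurd ((eq2 n).injective hc) (by simp)
      have hadj1 : (torusGraph 4 n).Adj (fun i => u (eq2 n (.inr i)))
          (fun i => w (eq2 n (.inr i))) := by
        refine ⟨i0, ⟨hne, hpm⟩, ?_⟩
        intro i hi
        refine hrest (eq2 n (.inr i)) ?_
        intro hc
        exact hi (Sum.inr_injective ((eq2 n).injective hc))
      obtain ⟨i, hei⟩ := hCover _ ((SimpleGraph.mem_edgeSet (torusGraph 4 n)).2 hadj1)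
      rw [Walk.edges_map, List.mem_map] at hei
      obtain ⟨e0, he0, hmape⟩ := hei
      obtain ⟨z, rfl⟩ := Hedges hH he0
      rw [Sym2.map_pair_eq] at hmape
      have hmape' : s(mapFun 4 n (σ i) (P H z), mapFun 4 n (σ i) (P H (z+1)))
          = s((fun i' => u (eq2 n (.inr i'))), (fun i' => w (eq2 n (.inr i')))) := hmape
      obtain ⟨y, hy⟩ := mapFun_surj 4 n (σ i) (fun i' => u (eq2 n (.inl i')))
      obtain ⟨q, rfl⟩ := Psurj hH y
      have hkey : s(u, w) = E2 H (mapFun 4 n (σ i)) z q := by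
        rw [Sym2.eq_iff] at hmape'
        rcases hmape' with ⟨h1, h2⟩ | ⟨h1, h2⟩
        · have hueq : glue (mapFun 4 n (σ i) (P H q)) (mapFun 4 n (σ i) (P H z)) = u := by
            rw [h1, hy]; exact hu
          have hweq : glue (mapFun 4 n (σ i) (P H q)) (mapFun 4 n (σ i) (P H (z+1))) = w := by
            rw [h2, hy, hsame]; exact hw
          rw [E2, hueq, hweq]
        · have hueq : glue (mapFun 4 n (σ i) (P H q)) (mapFun 4 n (σ i) (P H (z+1))) = u := by
            rw [h2, hy]; exact hu
          have hweq : glue (mapFun 4 n (σ i) (P H q)) (mapFun 4 n (σ i) (P H z)) = w := by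
            rw [h1, hy, hsame]; exact hw
          rw [E2, hueq, hweq, Sym2.eq_swap]
      rcases eq_or_ne (z + q + 1) 0 with htag | htag
      · refine ⟨eq2 n (.inl i), ?_⟩
        simp only
        rw [Walk.edges_map, List.mem_map]
        refine ⟨E2 H id z q, E2_mem hn hH htag, ?_⟩
        have hmm : Sym2.map (mapFun 4 (2*n) (τ (eq2 n (.inl i)))) (E2 H id z q)
            = E2 H (mapFun 4 n (σ i)) z q := by rw [hτ_inl, map_E2_b]
        exact hmm.trans hkey.symm
      · refine ⟨eq2 n (.inr i), ?_⟩
        simp only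
        rw [Walk.edges_map, List.mem_map]
        refine ⟨E1 H id z q, E1_mem hn hH htag, ?_⟩
        have hmm : Sym2.map (mapFun 4 (2*n) (τ (eq2 n (.inr i)))) (E1 H id z q)
            = E2 H (mapFun 4 n (σ i)) z q := by rw [hτ_inr, map_E1_bs]
        exact hmm.trans hkey.symm
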